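/- Let R be a commutative ring and {M_α, φ_{αβ}}_{α∈ℕ} an inverse system of R-modules satisfying the trivial Mittag-Leffler condition. Then the map ϖ : ∏_{α∈ℕ} M_α → ∏_{α∈ℕ} M_α defined by ϖ((x_α)) = (x_α − φ_{α+1,α}(x_{α+1})) is an isomorphism; in particular lim M_α = 0 and lim^1 M_α = 0. -/
import Mathlib


/-- If an inverse system `{M_α, φ_{αβ}}` over `ℕ` satisfies the trivial Mittag-Leffler
condition, then the map `ϖ : ∏ M_α → ∏ M_α`, `(x_α) ↦ (x_α - φ_{α+1,α}(x_{α+1}))`, is an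
isomorphism; in particular `lim M_α = ker ϖ = 0` and `lim¹ M_α = coker ϖ = 0`. -/
theorem inverse_system_trivial_ML_pi_map_bijective
    {R : Type*} [CommRing R] (M : ℕ → Type*)
    [∀ α, AddCommGroup (M α)] [∀ α, Module R (M α)]
    (φ : ∀ α β, β ≤ α → (M α →ₗ[R] M β))
    (hid : ∀ α, φ α α le_rfl = LinearMap.id)
    (hcomp : ∀ α β γ (h1 : γ ≤ β) (h2 : β ≤ α),
      (φ β γ h1).comp (φ α β h2) = φ α γ (h1.trans h2))
    (hML : ∀ β, ∃ α, ∃ h : β ≤ α, φ α β h = 0) :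
    Function.Bijective (LinearMap.pi fun α =>
      (LinearMap.proj α : ((a : ℕ) → M a) →ₗ[R] M α)
        - (φ (α + 1) α (Nat.le_succ α)).comp (LinearMap.proj (α + 1))) := by
  classical
  choose n hn hφ0 using hML
  have hzero : ∀ β k (h : β ≤ k), n β ≤ k → φ k β h = 0 := by
    intro β k h h'
    rw [← hcomp k (n β) β (hn β) h', hφ0, LinearMap.zero_comp]
  constructor
  · rw [injective_iff_map_eq_zero]
    intro x hx
    have hstep : ∀ α, x α = φ (α + 1) α (Nat.le_succ α) (x (α + 1)) := by
      intro α
      have h := congrFun hx α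
      simpa [sub_eq_zero] using h
    have key : ∀ α β (h : β ≤ α), x β = φ α β h (x α) := by
      intro α β h
      induction α, h using Nat.le_induction with
      | base => rw [hid]; rfl
      | succ α h ih =>
        rw [ih, hstep α, ← LinearMap.comp_apply, hcomp (α + 1) α β h (Nat.le_succ α)]
    funext β
    rw [key (n β) β (hn β), hφ0, LinearMap.zero_apply, Pi.zero_apply]
  · intro y
    refine ⟨fun β => ∑ k ∈ Finset.range (n β),
      if h : β ≤ k then φ k β h (y k) else 0, ?_⟩
    funext α
    set N := max (max (n α) (n (α + 1))) (α + 1) with hN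
    have hext : ∀ β, n β ≤ N →
        (∑ k ∈ Finset.range (n β), if h : β ≤ k then φ k β h (y k) else 0)
          = ∑ k ∈ Finset.range N, if h : β ≤ k then φ k β h (y k) else 0 := by
      intro β hβ
      refine Finset.sum_subset (Finset.range_subset_range.mpr hβ) ?_
      intro k _ hk
      rw [Finset.mem_range, not_lt] at hk
      split
      · next h => rw [hzero β k h hk, LinearMap.zero_apply]
      · rfl
    have h1 : n α ≤ N := le_max_of_le_left (le_max_left _ _)
    have h2 : n (α + 1) ≤ N := le_max_of_le_left (le_max_right _ _)
    have hαN : α ∈ Finset.range N := by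
      rw [Finset.mem_range]; exact lt_of_lt_of_le (Nat.lt_succ_self α) (le_max_right _ _)
    simp only [LinearMap.pi_apply, LinearMap.sub_apply, LinearMap.proj_apply,
      LinearMap.comp_apply]
    rw [hext α h1, hext (α + 1) h2, map_sum, ← Finset.sum_sub_distrib]
    have key : ∀ k ∈ Finset.range N,
        ((if h : α ≤ k then φ k α h (y k) else 0)
          - φ (α + 1) α (Nat.le_succ α) (if h : α + 1 ≤ k then φ k (α + 1) h (y k) else 0))
        = if k = α then y α else 0 := by
      intro k _
      rcases lt_trichotomy k α with hk | hk | hk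
      · rw [dif_neg (by omega), dif_neg (by omega), if_neg (by omega), map_zero, sub_zero]
      · subst hk
        rw [dif_pos le_rfl, dif_neg (by omega), if_pos rfl, hid, LinearMap.id_apply,
          map_zero, sub_zero]
      · rw [dif_pos hk.le, dif_pos (Nat.succ_le_of_lt hk), if_neg (by omega), ← LinearMap.comp_apply,
          hcomp k (α + 1) α (Nat.le_succ α) (Nat.succ_le_of_lt hk), sub_self]
    rw [Finset.sum_congr rfl key, Finset.sum_ite_eq' (Finset.range N) α (fun _ => y α)]
    exact if_pos hαN
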